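/- In a free group, every nontrivial element has a centralizer that is an infinite cyclic group. -/

import Mathlib

private lemma chain'_reduce {α : Type*} [DecidableEq α] :
    ∀ L : List (α × Bool),
      List.Chain' (fun p q => ¬(p.1 = q.1 ∧ p.2 = !q.2)) (FreeGroup.reduce L)
  | [] => List.isChain_nil
  | x :: L => by
    have ih := chain'_reduce L
    rw [FreeGroup.reduce.cons]
    cases h : FreeGroup.reduce L with
    | nil => simp; exact List.isChain_singleton _
    | cons y t =>
      rw [h] at ih
      by_cases hb : x.1 = y.1 ∧ x.2 = !y.2
      · show List.Chain' _ (if x.1 = y.1 ∧ x.2 = !y.2 then t else x :: y :: t)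
        rw [if_pos hb]
        exact ih.tail
      · show List.Chain' _ (if x.1 = y.1 ∧ x.2 = !y.2 then t else x :: y :: t)
        rw [if_neg hb]
        exact List.isChain_cons_cons.mpr ⟨hb, ih⟩

private lemma reduce_eq_self' {α : Type*} [DecidableEq α] :
    ∀ L : List (α × Bool),
      List.Chain' (fun p q => ¬(p.1 = q.1 ∧ p.2 = !q.2)) L → FreeGroup.reduce L = L
  | [], _ => rfl
  | [_], _ => rfl
  | x :: y :: t, h => by
    have h1 := List.isChain_cons_cons.mp h
    have ih := reduce_eq_self' (y :: t) h1.2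
    rw [FreeGroup.reduce.cons, ih]
    show (if x.1 = y.1 ∧ x.2 = !y.2 then t else x :: y :: t) = x :: y :: t
    rw [if_neg h1.1]

private lemma exists_not_commute {β : Type*} (a b : β) (hab : a ≠ b)
    (x : FreeGroup β) (hx : x ≠ 1) : ∃ g : FreeGroup β, g * x ≠ x * g := by
  classical
  have hL : x.toWord ≠ [] := fun h => hx (FreeGroup.toWord_eq_nil_iff.mp h)
  obtain ⟨p, T, hLT⟩ := List.exists_cons_of_ne_nil hL
  obtain ⟨c, hc⟩ : ∃ c : β, ((p :: T).getLast (List.cons_ne_nil _ _)).1 ≠ c := by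
    by_cases h : ((p :: T).getLast (List.cons_ne_nil _ _)).1 = a
    · exact ⟨b, h ▸ hab⟩
    · exact ⟨a, h⟩
  have hchainL : List.Chain' (fun p q : β × Bool => ¬(p.1 = q.1 ∧ p.2 = !q.2)) (p :: T) := by
    rw [← hLT, ← FreeGroup.reduce_toWord x]
    exact chain'_reduce _
  have hchainR : List.Chain' (fun p q : β × Bool => ¬(p.1 = q.1 ∧ p.2 = !q.2))
      ((c, p.2) :: ((p :: T) ++ [(c, !p.2)])) := by
    refine List.isChain_cons.mpr ⟨?_, List.isChain_append.mpr
      ⟨hchainL, List.isChain_singleton _, ?_⟩⟩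
    · intro y hy
      have hy' : y = p := by simpa using hy.symm
      subst hy'
      rintro ⟨-, h2⟩
      exact (Bool.not_ne_self y.2).symm h2
    · intro u hu v hv
      have hu' : u = (p :: T).getLast (List.cons_ne_nil _ _) := by
        rw [List.getLast?_eq_getLast (List.cons_ne_nil _ _)] at hu
        simpa using hu.symm
      have hv' : v = (c, !p.2) := by simpa using hv.symm
      subst hu' hv'
      rintro ⟨h1, -⟩
      exact hc h1
  refine ⟨FreeGroup.mk [(c, p.2)], fun hcomm => ?_⟩
  have hginv : (FreeGroup.mk [(c, p.2)])⁻¹ = FreeGroup.mk [(c, !p.2)] := by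
    rw [FreeGroup.inv_mk]
    simp [FreeGroup.invRev]
  have hconj : FreeGroup.mk [(c, p.2)] * x * (FreeGroup.mk [(c, p.2)])⁻¹ =
      FreeGroup.mk ((c, p.2) :: ((p :: T) ++ [(c, !p.2)])) := by
    conv_lhs => rw [← FreeGroup.mk_toWord (x := x)]
    rw [hginv, hLT, FreeGroup.mul_mk, FreeGroup.mul_mk]
    simp
  have hfix : FreeGroup.mk [(c, p.2)] * x * (FreeGroup.mk [(c, p.2)])⁻¹ = x := by
    rw [hcomm, mul_inv_cancel_right]
  have hwords : (c, p.2) :: ((p :: T) ++ [(c, !p.2)]) = x.toWord := by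
    have h2 : (FreeGroup.mk ((c, p.2) :: ((p :: T) ++ [(c, !p.2)]))).toWord = x.toWord := by
      rw [← hconj, hfix]
    rwa [FreeGroup.toWord_mk, reduce_eq_self' _ hchainR] at h2
  have hlen := congrArg List.length hwords
  rw [hLT] at hlen
  simp at hlen
  omega

private noncomputable def freeGroupUnitMulEquivInt : FreeGroup Unit ≃* Multiplicative ℤ :=
  MonoidHom.toMulEquiv
    (FreeGroup.lift fun _ => Multiplicative.ofAdd (1 : ℤ))
    (zpowersHom _ (FreeGroup.of ()))
    (by
      ext x
      simp)
    (by
      apply MonoidHom.ext_mint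
      simp)

/-- In a free group, every nontrivial element has a centralizer that is an
infinite cyclic group (i.e. isomorphic to `ℤ`). -/
theorem centralizer_of_ne_one_infinite_cyclic {α : Type*} (w : FreeGroup α) (hw : w ≠ 1) :
    Nonempty (Subgroup.centralizer {w} ≃* Multiplicative ℤ) := by
  classical
  set H := Subgroup.centralizer ({w} : Set (FreeGroup α)) with hH
  have hwH : w ∈ H := Subgroup.mem_centralizer_singleton_iff.mpr rfl
  set w' : H := ⟨w, hwH⟩ with hw'
  have hw'1 : w' ≠ 1 := by
    simp only [hw', ne_eq, Subtype.ext_iff]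
    exact hw
  have hcent : ∀ h : H, h * w' = w' * h := by
    intro h
    apply Subtype.ext
    simp only [Subgroup.coe_mul]
    exact Subgroup.mem_centralizer_singleton_iff.mp h.2
  -- H is a free group (Nielsen–Schreier)
  set e := IsFreeGroup.toFreeGroup H with he
  set z := e w' with hz
  have hz1 : z ≠ 1 := fun h => hw'1 (e.injective (h.trans (map_one e).symm))
  have hzc : ∀ g : FreeGroup (IsFreeGroup.Generators H), g * z = z * g := by
    intro g
    have := hcent (e.symm g)
    have := congrArg e this
    simpa [hz] using this
  have hne : Nonempty (IsFreeGroup.Generators H) := by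
    by_contra hemp
    rw [not_nonempty_iff] at hemp
    apply hz1
    rw [← FreeGroup.toWord_eq_nil_iff]
    exact List.eq_nil_iff_forall_not_mem.mpr fun p hp => (hemp.false p.1).elim
  have hsub : Subsingleton (IsFreeGroup.Generators H) := by
    constructor
    intro a b
    by_contra hab
    obtain ⟨g, hg⟩ := exists_not_commute a b hab z hz1
    exact hg (hzc g)
  have : Unique (IsFreeGroup.Generators H) := uniqueOfSubsingleton hne.some
  exact ⟨e.trans ((FreeGroup.freeGroupCongr (Equiv.ofUnique _ Unit)).trans
    freeGroupUnitMulEquivInt)⟩
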